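/- Assume (H2), i.e. g₁₁·g₂₂ − g₁₂·g₂₁ < 0, with d₁, d₂ > 0 and g₁₁, g₁₂, g₂₁, g₂₂ > 0. Set k₃ = g₁₁·(g₁₁·g₂₂ − g₁₂·g₂₁)², k₂ = d₁·(g₁₂·g₂₁ − 3·g₁₁·g₂₂)·(g₁₂·g₂₁ − g₁₁·g₂₂), k₁ = −d₁·(d₂·g₂₁·g₁₂² + 2·d₁·g₂₁·g₂₂·g₁₂ − 3·d₁·g₁₁·g₂₂²), k₀ = d₁³·g₂₂², and let p(u) = k₃·u³ + k₂·u² + k₁·u + k₀. Then, with A = k₂² − 3·k₁·k₃, B = k₁·k₂ − 9·k₀·k₃, C = k₁² − 3·k₀·k₂, the Shengjin discriminant B² − 4·A·C is strictly negative; consequently p has three distinct real roots u₃ < u₂ < u₁, and these satisfy u₃ < 0 < u₂ ≤ u⋆ < u₁, where u⋆ = d₁·g₂₂/(g₁₂·g₂₁ − g₁₁·g₂₂) > 0. -/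
import Mathlib

set_option maxHeartbeats 1000000


/-- Under (H2), the Shengjin discriminant of the cubic `p` governing the
extreme points of `σ` is strictly negative, so `p` has three distinct real
roots `u₃ < u₂ < u₁` satisfying `u₃ < 0 < u₂ ≤ u⋆ < u₁`, where
`u⋆ = d₁·g₂₂/(g₁₂·g₂₁ − g₁₁·g₂₂) > 0`. -/
theorem stmt_9 (d₁ d₂ g₁₁ g₁₂ g₂₁ g₂₂ : ℝ)
    (hd₁ : 0 < d₁) (hd₂ : 0 < d₂)
    (hg₁₁ : 0 < g₁₁) (hg₁₂ : 0 < g₁₂) (hg₂₁ : 0 < g₂₁) (hg₂₂ : 0 < g₂₂)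
    (hH2 : g₁₁ * g₂₂ - g₁₂ * g₂₁ < 0)
    (k₃ k₂ k₁ k₀ A B C ustar : ℝ)
    (hk₃ : k₃ = g₁₁ * (g₁₁ * g₂₂ - g₁₂ * g₂₁) ^ 2)
    (hk₂ : k₂ = d₁ * (g₁₂ * g₂₁ - 3 * g₁₁ * g₂₂) * (g₁₂ * g₂₁ - g₁₁ * g₂₂))
    (hk₁ : k₁ = -d₁ * (d₂ * g₂₁ * g₁₂ ^ 2 + 2 * d₁ * g₂₁ * g₂₂ * g₁₂ -
      3 * d₁ * g₁₁ * g₂₂ ^ 2))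
    (hk₀ : k₀ = d₁ ^ 3 * g₂₂ ^ 2)
    (hA : A = k₂ ^ 2 - 3 * k₁ * k₃)
    (hB : B = k₁ * k₂ - 9 * k₀ * k₃)
    (hC : C = k₁ ^ 2 - 3 * k₀ * k₂)
    (hustar : ustar = d₁ * g₂₂ / (g₁₂ * g₂₁ - g₁₁ * g₂₂)) :
    B ^ 2 - 4 * A * C < 0 ∧ 0 < ustar ∧
    ∃ u₃ u₂ u₁ : ℝ, u₃ < u₂ ∧ u₂ < u₁ ∧
      k₃ * u₃ ^ 3 + k₂ * u₃ ^ 2 + k₁ * u₃ + k₀ = 0 ∧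
      k₃ * u₂ ^ 3 + k₂ * u₂ ^ 2 + k₁ * u₂ + k₀ = 0 ∧
      k₃ * u₁ ^ 3 + k₂ * u₁ ^ 2 + k₁ * u₁ + k₀ = 0 ∧
      u₃ < 0 ∧ 0 < u₂ ∧ u₂ ≤ ustar ∧ ustar < u₁ := by
  have hD : 0 < g₁₂ * g₂₁ - g₁₁ * g₂₂ := by linarith
  have hx : 0 < g₁₂ * g₂₁ := mul_pos hg₁₂ hg₂₁
  have hy : 0 < g₁₁ * g₂₂ := mul_pos hg₁₁ hg₂₂
  -- positivity of E
  have hE : 0 < 4 * d₂ ^ 2 * (g₁₁ * g₁₂ ^ 2 * g₂₁) + 4 * d₁ ^ 2 * (g₁₂ * g₂₁ ^ 2 * g₂₂)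
      + d₁ * d₂ * ((g₁₂ * g₂₁) ^ 2 + 18 * (g₁₂ * g₂₁) * (g₁₁ * g₂₂) - 27 * (g₁₁ * g₂₂) ^ 2) := by
    rcases le_or_gt (9 * (g₁₁ * g₂₂)) (g₁₂ * g₂₁) with h | h
    · have hR : 0 < (g₁₂ * g₂₁) ^ 2 + 18 * (g₁₂ * g₂₁) * (g₁₁ * g₂₂) - 27 * (g₁₁ * g₂₂) ^ 2 := by
        have e1 : (g₁₂ * g₂₁) ^ 2 + 18 * (g₁₂ * g₂₁) * (g₁₁ * g₂₂) - 27 * (g₁₁ * g₂₂) ^ 2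
            = (g₁₂ * g₂₁ - 9 * (g₁₁ * g₂₂)) * (g₁₂ * g₂₁ + 27 * (g₁₁ * g₂₂))
              + 216 * ((g₁₁ * g₂₂) * (g₁₁ * g₂₂)) := by ring
        have e2 : 0 ≤ (g₁₂ * g₂₁ - 9 * (g₁₁ * g₂₂)) * (g₁₂ * g₂₁ + 27 * (g₁₁ * g₂₂)) :=
          mul_nonneg (by linarith) (by linarith)
        have e3 : 0 < (g₁₁ * g₂₂) * (g₁₁ * g₂₂) := mul_pos hy hy
        linarith [e1, e2, e3]
      have h1 : 0 < 4 * d₂ ^ 2 * (g₁₁ * g₁₂ ^ 2 * g₂₁) := by positivity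
      have h2 : 0 < 4 * d₁ ^ 2 * (g₁₂ * g₂₁ ^ 2 * g₂₂) := by positivity
      have h3 : 0 < d₁ * d₂ * ((g₁₂ * g₂₁) ^ 2 + 18 * (g₁₂ * g₂₁) * (g₁₁ * g₂₂)
          - 27 * (g₁₁ * g₂₂) ^ 2) := mul_pos (mul_pos hd₁ hd₂) hR
      linarith
    · have hP : (0:ℝ) < 16 * (g₁₁ * g₁₂ ^ 2 * g₂₁) := by positivity
      have key : 16 * (g₁₁ * g₁₂ ^ 2 * g₂₁) *
          (4 * d₂ ^ 2 * (g₁₁ * g₁₂ ^ 2 * g₂₁) + 4 * d₁ ^ 2 * (g₁₂ * g₂₁ ^ 2 * g₂₂)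
            + d₁ * d₂ * ((g₁₂ * g₂₁) ^ 2 + 18 * (g₁₂ * g₂₁) * (g₁₁ * g₂₂) - 27 * (g₁₁ * g₂₂) ^ 2))
          = (8 * (g₁₁ * g₁₂ ^ 2 * g₂₁) * d₂
              + ((g₁₂ * g₂₁) ^ 2 + 18 * (g₁₂ * g₂₁) * (g₁₁ * g₂₂) - 27 * (g₁₁ * g₂₂) ^ 2) * d₁) ^ 2
            + (g₁₂ * g₂₁ - g₁₁ * g₂₂) * (9 * (g₁₁ * g₂₂) - g₁₂ * g₂₁) ^ 3 * d₁ ^ 2 := by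
        ring
      have htail : 0 < (g₁₂ * g₂₁ - g₁₁ * g₂₂) * (9 * (g₁₁ * g₂₂) - g₁₂ * g₂₁) ^ 3 * d₁ ^ 2 :=
        mul_pos (mul_pos hD (pow_pos (by linarith) 3)) (pow_pos hd₁ 2)
      have hsq : 0 ≤ (8 * (g₁₁ * g₁₂ ^ 2 * g₂₁) * d₂
          + ((g₁₂ * g₂₁) ^ 2 + 18 * (g₁₂ * g₂₁) * (g₁₁ * g₂₂) - 27 * (g₁₁ * g₂₂) ^ 2) * d₁) ^ 2 :=
        sq_nonneg _
      by_contra hcon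
      push_neg at hcon
      have hle := mul_nonpos_of_nonneg_of_nonpos hP.le hcon
      rw [key] at hle
      linarith
  -- discriminant is negative
  have hdisc : B ^ 2 - 4 * A * C < 0 := by
    have hid : B ^ 2 - 4 * A * C
        = -(3 * d₁ ^ 3 * d₂ * g₁₂ ^ 4 * g₂₁ ^ 2 * (g₁₂ * g₂₁ - g₁₁ * g₂₂) ^ 2 *
            (4 * d₂ ^ 2 * (g₁₁ * g₁₂ ^ 2 * g₂₁) + 4 * d₁ ^ 2 * (g₁₂ * g₂₁ ^ 2 * g₂₂)
              + d₁ * d₂ * ((g₁₂ * g₂₁) ^ 2 + 18 * (g₁₂ * g₂₁) * (g₁₁ * g₂₂)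
                - 27 * (g₁₁ * g₂₂) ^ 2))) := by
      subst hA hB hC hk₀ hk₁ hk₂ hk₃; ring
    have hpos : 0 < 3 * d₁ ^ 3 * d₂ * g₁₂ ^ 4 * g₂₁ ^ 2 * (g₁₂ * g₂₁ - g₁₁ * g₂₂) ^ 2 :=
      mul_pos (by positivity) (pow_pos hD 2)
    have := mul_pos hpos hE
    linarith [hid, this]
  have hk₃pos : 0 < k₃ := by
    have h2 : (g₁₁ * g₂₂ - g₁₂ * g₂₁) ^ 2 = (g₁₂ * g₂₁ - g₁₁ * g₂₂) ^ 2 := by ring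
    rw [hk₃, h2]; exact mul_pos hg₁₁ (pow_pos hD 2)
  have hk₀pos : 0 < k₀ := by rw [hk₀]; positivity
  have hupos : 0 < ustar := by
    rw [hustar]; exact div_pos (mul_pos hd₁ hg₂₂) hD
  -- value at ustar is negative
  have hfu : k₃ * ustar ^ 3 + k₂ * ustar ^ 2 + k₁ * ustar + k₀ < 0 := by
    have hkey : (k₃ * ustar ^ 3 + k₂ * ustar ^ 2 + k₁ * ustar + k₀)
        * (g₁₂ * g₂₁ - g₁₁ * g₂₂) ^ 3
        = -(d₁ ^ 2 * d₂ * g₁₂ ^ 2 * g₂₁ * g₂₂ * (g₁₂ * g₂₁ - g₁₁ * g₂₂) ^ 2) := by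
      subst hustar hk₀ hk₁ hk₂ hk₃
      field_simp
      ring
    have hb : 0 < d₁ ^ 2 * d₂ * g₁₂ ^ 2 * g₂₁ * g₂₂ * (g₁₂ * g₂₁ - g₁₁ * g₂₂) ^ 2 :=
      mul_pos (by positivity) (pow_pos hD 2)
    by_contra hcon
    push_neg at hcon
    have := mul_nonneg hcon (pow_pos hD 3).le
    linarith
  -- bound M
  set M : ℝ := (|k₂| + |k₁| + |k₀|) / k₃ + 1 + ustar with hM
  have habs : 0 ≤ (|k₂| + |k₁| + |k₀|) / k₃ :=
    div_nonneg (by positivity) hk₃pos.le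
  have hM1 : 1 ≤ M := by rw [hM]; linarith
  have hMpos : 0 < M := by linarith
  have hMu : ustar < M := by rw [hM]; linarith
  have hk₃M : k₃ * M = (|k₂| + |k₁| + |k₀|) + k₃ * (1 + ustar) := by
    rw [hM]
    field_simp
    ring
  have hM2 : 1 ≤ M ^ 2 := by nlinarith [hM1, hMpos]
  -- elementary term bounds
  have t2 : 0 ≤ (k₂ + |k₂|) * M ^ 2 :=
    mul_nonneg (by linarith [neg_abs_le k₂]) (sq_nonneg M)
  have t2' : 0 ≤ (|k₂| - k₂) * M ^ 2 :=
    mul_nonneg (by linarith [le_abs_self k₂]) (sq_nonneg M)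
  have t1a : -(|k₁| * M) ≤ k₁ * M := by
    have := mul_le_mul_of_nonneg_right (neg_abs_le k₁) hMpos.le
    linarith
  have t1b : k₁ * M ≤ |k₁| * M := by
    have := mul_le_mul_of_nonneg_right (le_abs_self k₁) hMpos.le
    linarith
  have t1c : |k₁| * M ≤ |k₁| * M ^ 2 := by
    have h := mul_nonneg (mul_nonneg (abs_nonneg k₁) hMpos.le) (sub_nonneg.2 hM1)
    have e : |k₁| * M * (M - 1) = |k₁| * M ^ 2 - |k₁| * M := by ring
    linarith [h, e.symm.le]
  have t0a : -(|k₀| * M ^ 2) ≤ k₀ := by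
    have h := mul_le_mul_of_nonneg_left hM2 (abs_nonneg k₀)
    have := neg_abs_le k₀
    linarith
  have t0b : k₀ ≤ |k₀| * M ^ 2 := by
    have h := mul_le_mul_of_nonneg_left hM2 (abs_nonneg k₀)
    have := le_abs_self k₀
    linarith
  have hk₃u : 0 < k₃ * (1 + ustar) * M ^ 2 :=
    mul_pos (mul_pos hk₃pos (by linarith)) (by positivity)
  have hsplit : (k₃ * M - |k₂| - |k₁| - |k₀|) * M ^ 2 = k₃ * (1 + ustar) * M ^ 2 := by
    have h3 : k₃ * M - |k₂| - |k₁| - |k₀| = k₃ * (1 + ustar) := by linarith [hk₃M]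
    rw [h3]
  have hfM : 0 < k₃ * M ^ 3 + k₂ * M ^ 2 + k₁ * M + k₀ := by
    have e : k₃ * M ^ 3 + k₂ * M ^ 2 + k₁ * M + k₀
        - (k₃ * M - |k₂| - |k₁| - |k₀|) * M ^ 2
        = (k₂ + |k₂|) * M ^ 2 + (|k₁| * M ^ 2 + k₁ * M) + (|k₀| * M ^ 2 + k₀) := by ring
    linarith [e, t2, t1a, t1c, t0a, hsplit, hk₃u]
  have hfnegM : k₃ * (-M) ^ 3 + k₂ * (-M) ^ 2 + k₁ * (-M) + k₀ < 0 := by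
    have e : -((k₃ * M - |k₂| - |k₁| - |k₀|) * M ^ 2)
        - (k₃ * (-M) ^ 3 + k₂ * (-M) ^ 2 + k₁ * (-M) + k₀)
        = (|k₂| - k₂) * M ^ 2 + (|k₁| * M ^ 2 + k₁ * M) + (|k₀| * M ^ 2 - k₀) := by ring
    linarith [e, t2', t1a, t1c, t0b, hsplit, hk₃u]
  have hcont : Continuous (fun u : ℝ => k₃ * u ^ 3 + k₂ * u ^ 2 + k₁ * u + k₀) := by
    continuity
  have hf0 : k₃ * (0:ℝ) ^ 3 + k₂ * (0:ℝ) ^ 2 + k₁ * (0:ℝ) + k₀ = k₀ := by ring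
  -- root u₃ in (-M, 0)
  obtain ⟨u₃, hu₃m, hu₃⟩ : ∃ u ∈ Set.Ioo (-M) (0:ℝ),
      k₃ * u ^ 3 + k₂ * u ^ 2 + k₁ * u + k₀ = 0 := by
    have h := intermediate_value_Ioo (a := -M) (b := 0)
      (f := fun u : ℝ => k₃ * u ^ 3 + k₂ * u ^ 2 + k₁ * u + k₀)
      (by linarith) hcont.continuousOn
    have h0 : (0:ℝ) ∈ Set.Ioo (k₃ * (-M) ^ 3 + k₂ * (-M) ^ 2 + k₁ * (-M) + k₀)
        (k₃ * (0:ℝ) ^ 3 + k₂ * (0:ℝ) ^ 2 + k₁ * (0:ℝ) + k₀) := by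
      constructor
      · exact hfnegM
      · rw [hf0]; exact hk₀pos
    obtain ⟨u, hu, hueq⟩ := h h0
    exact ⟨u, hu, hueq⟩
  -- root u₂ in (0, ustar)
  obtain ⟨u₂, hu₂m, hu₂⟩ : ∃ u ∈ Set.Ioo (0:ℝ) ustar,
      k₃ * u ^ 3 + k₂ * u ^ 2 + k₁ * u + k₀ = 0 := by
    have h := intermediate_value_Ioo' (a := (0:ℝ)) (b := ustar)
      (f := fun u : ℝ => k₃ * u ^ 3 + k₂ * u ^ 2 + k₁ * u + k₀)
      hupos.le hcont.continuousOn
    have h0 : (0:ℝ) ∈ Set.Ioo (k₃ * ustar ^ 3 + k₂ * ustar ^ 2 + k₁ * ustar + k₀)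
        (k₃ * (0:ℝ) ^ 3 + k₂ * (0:ℝ) ^ 2 + k₁ * (0:ℝ) + k₀) := by
      constructor
      · exact hfu
      · rw [hf0]; exact hk₀pos
    obtain ⟨u, hu, hueq⟩ := h h0
    exact ⟨u, hu, hueq⟩
  -- root u₁ in (ustar, M)
  obtain ⟨u₁, hu₁m, hu₁⟩ : ∃ u ∈ Set.Ioo ustar M,
      k₃ * u ^ 3 + k₂ * u ^ 2 + k₁ * u + k₀ = 0 := by
    have h := intermediate_value_Ioo (a := ustar) (b := M)
      (f := fun u : ℝ => k₃ * u ^ 3 + k₂ * u ^ 2 + k₁ * u + k₀)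
      hMu.le hcont.continuousOn
    have h0 : (0:ℝ) ∈ Set.Ioo (k₃ * ustar ^ 3 + k₂ * ustar ^ 2 + k₁ * ustar + k₀)
        (k₃ * M ^ 3 + k₂ * M ^ 2 + k₁ * M + k₀) := ⟨hfu, hfM⟩
    obtain ⟨u, hu, hueq⟩ := h h0
    exact ⟨u, hu, hueq⟩
  refine ⟨hdisc, hupos, u₃, u₂, u₁, ?_, ?_, hu₃, hu₂, hu₁, hu₃m.2, hu₂m.1, hu₂m.2.le, hu₁m.1⟩
  · exact lt_trans hu₃m.2 hu₂m.1
  · exact lt_trans hu₂m.2 hu₁m.1
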